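/- For every integer I_0 ≥ 0 there exist real constants C_{I_{01}, I_{02}} (indexed by pairs of nonnegative integers with I_{01} + I_{02} = I_0) and C'_{Ĩ_{01}, Ĩ_{02}} (indexed by pairs of nonnegative integers with Ĩ_{01} + Ĩ_{02} ≤ I_0 - 1) such that for all smooth functions v, w : ℝ × ℝⁿ → ℝ one has ∂_t^{I_0} Q(v, w) = Σ_{I_{01} + I_{02} = I_0} C_{I_{01}, I_{02}} Q(∂_t^{I_{01}} v, ∂_t^{I_{02}} w) + e^{-t} Σ_{i=1}^n Σ_{Ĩ_{01} + Ĩ_{02} ≤ I_0 - 1} C'_{Ĩ_{01}, Ĩ_{02}} (∂_t^{Ĩ_{01}} ∂_{x_i} v)(∂_t^{Ĩ_{02}} ∂_{x_i} w) everywhere. -/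

import Mathlib

open Real MeasureTheory

/-- Time derivative ∂ₜ of a function on ℝ × ℝⁿ. -/
noncomputable def pT (n : ℕ) (φ : ℝ × (Fin n → ℝ) → ℝ) : ℝ × (Fin n → ℝ) → ℝ :=
  fun p => deriv (fun s => φ (s, p.2)) p.1

/-- Spatial derivative ∂ₓᵢ of a function on ℝ × ℝⁿ. -/
noncomputable def pX (n : ℕ) (i : Fin n) (φ : ℝ × (Fin n → ℝ) → ℝ) : ℝ × (Fin n → ℝ) → ℝ :=
  fun p => deriv (fun s => φ (p.1, Function.update p.2 i s)) (p.2 i)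

/-- Mixed spatial derivative D^I = ∂ₓ₁^{I₁} ⋯ ∂ₓₙ^{Iₙ}. -/
noncomputable def Dmix (n : ℕ) (I : Fin n → ℕ) (φ : ℝ × (Fin n → ℝ) → ℝ) : ℝ × (Fin n → ℝ) → ℝ :=
  (List.ofFn (fun i : Fin n => (pX n i)^[I i])).foldr (· ∘ ·) id φ

/-- The de Sitter wave operator □_g φ = -∂ₜ²φ - (n/2)∂ₜφ + e^{-t} Σᵢ ∂ₓᵢ²φ. -/
noncomputable def dBox (n : ℕ) (φ : ℝ × (Fin n → ℝ) → ℝ) : ℝ × (Fin n → ℝ) → ℝ :=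
  fun p => -(pT n (pT n φ) p) - ((n : ℝ) / 2) * pT n φ p
    + Real.exp (-p.1) * ∑ i : Fin n, pX n i (pX n i φ) p

/-- The de Sitter null form Q(φ,ψ) = -φₜψₜ + e^{-t} Σᵢ φᵢψᵢ. -/
noncomputable def nullQ (n : ℕ) (φ ψ : ℝ × (Fin n → ℝ) → ℝ) : ℝ × (Fin n → ℝ) → ℝ :=
  fun p => -(pT n φ p) * pT n ψ p + Real.exp (-p.1) * ∑ i : Fin n, pX n i φ p * pX n i ψ p

variable {n : ℕ}


lemma curveT_smooth (x : Fin n → ℝ) :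
    ContDiff ℝ (⊤ : ℕ∞) (fun s : ℝ => ((s, x) : ℝ × (Fin n → ℝ))) :=
  contDiff_id.prodMk contDiff_const

lemma pT_eq {φ : ℝ × (Fin n → ℝ) → ℝ} {p : ℝ × (Fin n → ℝ)}
    (hφ : DifferentiableAt ℝ φ p) :
    pT n φ p = fderiv ℝ φ p (1, 0) := by
  have hc : HasDerivAt (fun s : ℝ => ((s, p.2) : ℝ × (Fin n → ℝ))) ((1 : ℝ), (0 : Fin n → ℝ)) p.1 :=
    (hasDerivAt_id p.1).prodMk (hasDerivAt_const p.1 p.2)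
  have := hφ.hasFDerivAt.comp_hasDerivAt p.1 (by simpa using hc)
  simpa [pT, Function.comp_def] using this.deriv

lemma pX_eq {φ : ℝ × (Fin n → ℝ) → ℝ} {p : ℝ × (Fin n → ℝ)} (i : Fin n)
    (hφ : DifferentiableAt ℝ φ p) :
    pX n i φ p = fderiv ℝ φ p (0, Pi.single i 1) := by
  have hc : HasDerivAt (fun s : ℝ => ((p.1, Function.update p.2 i s) : ℝ × (Fin n → ℝ)))
      ((0 : ℝ), Pi.single i (1 : ℝ)) (p.2 i) :=
    (hasDerivAt_const (p.2 i) p.1).prodMk (hasDerivAt_update p.2 i (p.2 i))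
  have hp : ((p.1, Function.update p.2 i (p.2 i)) : ℝ × (Fin n → ℝ)) = p := by simp
  have h2 : HasFDerivAt φ (fderiv ℝ φ p) (p.1, Function.update p.2 i (p.2 i)) := by
    rw [hp]; exact hφ.hasFDerivAt
  have key := h2.comp_hasDerivAt (p.2 i) hc
  simpa [pX, Function.comp_def] using key.deriv

lemma contDiff_pT {φ : ℝ × (Fin n → ℝ) → ℝ} (hφ : ContDiff ℝ (⊤ : ℕ∞) φ) :
    ContDiff ℝ (⊤ : ℕ∞) (pT n φ) := by
  have h : pT n φ = fun p => fderiv ℝ φ p (1, 0) :=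
    funext fun p => pT_eq (hφ.differentiable (by simp) p)
  rw [h]
  exact (hφ.fderiv_right (mod_cast le_top)).clm_apply contDiff_const

lemma contDiff_pX {φ : ℝ × (Fin n → ℝ) → ℝ} (i : Fin n) (hφ : ContDiff ℝ (⊤ : ℕ∞) φ) :
    ContDiff ℝ (⊤ : ℕ∞) (pX n i φ) := by
  have h : pX n i φ = fun p => fderiv ℝ φ p (0, Pi.single i 1) :=
    funext fun p => pX_eq i (hφ.differentiable (by simp) p)
  rw [h]
  exact (hφ.fderiv_right (mod_cast le_top)).clm_apply contDiff_const

lemma pT_pX_comm {φ : ℝ × (Fin n → ℝ) → ℝ} (i : Fin n) (hφ : ContDiff ℝ (⊤ : ℕ∞) φ)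
    (p : ℝ × (Fin n → ℝ)) :
    pT n (pX n i φ) p = pX n i (pT n φ) p := by
  have hdφ : Differentiable ℝ φ := hφ.differentiable (by simp)
  have hg : ContDiff ℝ (⊤ : ℕ∞) (fderiv ℝ φ) := hφ.fderiv_right (mod_cast le_top)
  have hgd : DifferentiableAt ℝ (fderiv ℝ φ) p := hg.differentiable (by simp) p
  have hX : pX n i φ = fun q => fderiv ℝ φ q (0, Pi.single i 1) :=
    funext fun q => pX_eq i (hdφ q)
  have hT : pT n φ = fun q => fderiv ℝ φ q (1, 0) :=
    funext fun q => pT_eq (hdφ q)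
  have hsym : fderiv ℝ (fderiv ℝ φ) p ((1:ℝ), (0 : Fin n → ℝ)) (0, Pi.single i 1)
      = fderiv ℝ (fderiv ℝ φ) p (0, Pi.single i 1) (1, 0) :=
    (hφ.contDiffAt.isSymmSndFDerivAt (by rw [minSmoothness_of_isRCLikeNormedField]; exact WithTop.coe_le_coe.mpr (le_top : ((2 : ℕ∞)) ≤ ⊤))) _ _
  have happ : ∀ u : ℝ × (Fin n → ℝ), ∀ q,
      fderiv ℝ (fun r => fderiv ℝ φ r u) q
        = (ContinuousLinearMap.apply ℝ ℝ u).comp (fderiv ℝ (fderiv ℝ φ) q) := by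
    intro u q
    exact (((ContinuousLinearMap.apply ℝ ℝ u).hasFDerivAt).comp q
      ((hg.differentiable (by simp) q).hasFDerivAt)).fderiv
  have hXd : DifferentiableAt ℝ (pX n i φ) p := (contDiff_pX i hφ).differentiable (by simp) p
  have hTd : DifferentiableAt ℝ (pT n φ) p := (contDiff_pT hφ).differentiable (by simp) p
  rw [pT_eq hXd, pX_eq i hTd, hX, hT, happ, happ]
  simpa using hsym

lemma diff_slice {φ : ℝ × (Fin n → ℝ) → ℝ} (hφ : ContDiff ℝ (⊤ : ℕ∞) φ)
    (x : Fin n → ℝ) (s : ℝ) : DifferentiableAt ℝ (fun s : ℝ => φ (s, x)) s :=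
  ((hφ.comp (curveT_smooth x)).differentiable (by simp)) s

lemma pT_add {f g : ℝ × (Fin n → ℝ) → ℝ} (hf : ContDiff ℝ (⊤ : ℕ∞) f)
    (hg : ContDiff ℝ (⊤ : ℕ∞) g) (p : ℝ × (Fin n → ℝ)) :
    pT n (fun q => f q + g q) p = pT n f p + pT n g p := by
  simp only [pT]
  rw [deriv_fun_add (diff_slice hf p.2 p.1) (diff_slice hg p.2 p.1)]

lemma pT_mul {f g : ℝ × (Fin n → ℝ) → ℝ} (hf : ContDiff ℝ (⊤ : ℕ∞) f)
    (hg : ContDiff ℝ (⊤ : ℕ∞) g) (p : ℝ × (Fin n → ℝ)) :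
    pT n (fun q => f q * g q) p = pT n f p * g p + f p * pT n g p := by
  simp only [pT]
  rw [deriv_fun_mul (diff_slice hf p.2 p.1) (diff_slice hg p.2 p.1)]

lemma pT_neg (f : ℝ × (Fin n → ℝ) → ℝ) (p : ℝ × (Fin n → ℝ)) :
    pT n (fun q => -f q) p = -pT n f p := by
  simp only [pT]
  rw [deriv.fun_neg]

lemma pT_const_mul (c : ℝ) (f : ℝ × (Fin n → ℝ) → ℝ) (p : ℝ × (Fin n → ℝ)) :
    pT n (fun q => c * f q) p = c * pT n f p := by
  simp only [pT]
  rw [deriv_const_mul_field]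

lemma pT_sum {ι : Type*} (s : Finset ι) (f : ι → ℝ × (Fin n → ℝ) → ℝ)
    (hf : ∀ i ∈ s, ContDiff ℝ (⊤ : ℕ∞) (f i)) (p : ℝ × (Fin n → ℝ)) :
    pT n (fun q => ∑ i ∈ s, f i q) p = ∑ i ∈ s, pT n (f i) p := by
  simp only [pT]
  rw [deriv_fun_sum fun i hi => diff_slice (hf i hi) p.2 p.1]

lemma pT_exp (p : ℝ × (Fin n → ℝ)) :
    pT n (fun q => Real.exp (-q.1)) p = -Real.exp (-p.1) := by
  simp only [pT]
  have : HasDerivAt (fun s : ℝ => Real.exp (-s)) (Real.exp (-p.1) * (-1)) p.1 :=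
    (Real.hasDerivAt_exp (-p.1)).comp p.1 (hasDerivAt_neg p.1)
  simpa using this.deriv

lemma contDiff_exp_fst : ContDiff ℝ (⊤ : ℕ∞) (fun q : ℝ × (Fin n → ℝ) => Real.exp (-q.1)) :=
  Real.contDiff_exp.comp contDiff_fst.neg

lemma contDiff_nullQ {f g : ℝ × (Fin n → ℝ) → ℝ} (hf : ContDiff ℝ (⊤ : ℕ∞) f)
    (hg : ContDiff ℝ (⊤ : ℕ∞) g) : ContDiff ℝ (⊤ : ℕ∞) (nullQ n f g) := by
  unfold nullQ
  exact ((contDiff_pT hf).neg.mul (contDiff_pT hg)).add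
    (contDiff_exp_fst.mul (ContDiff.sum fun i _ => (contDiff_pX i hf).mul (contDiff_pX i hg)))

lemma pT_nullQ {f g : ℝ × (Fin n → ℝ) → ℝ} (hf : ContDiff ℝ (⊤ : ℕ∞) f)
    (hg : ContDiff ℝ (⊤ : ℕ∞) g) (p : ℝ × (Fin n → ℝ)) :
    pT n (nullQ n f g) p
      = nullQ n (pT n f) g p + nullQ n f (pT n g) p
        - Real.exp (-p.1) * ∑ i : Fin n, pX n i f p * pX n i g p := by
  have h1 : pT n (nullQ n f g) p
      = pT n (fun q => -(pT n f q) * pT n g q) p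
        + pT n (fun q => Real.exp (-q.1) * ∑ i : Fin n, pX n i f q * pX n i g q) p := by
    exact pT_add ((contDiff_pT hf).neg.mul (contDiff_pT hg))
      (contDiff_exp_fst.mul (ContDiff.sum fun i _ => (contDiff_pX i hf).mul (contDiff_pX i hg))) p
  have h2 : pT n (fun q => -(pT n f q) * pT n g q) p
      = -(pT n (pT n f) p) * pT n g p + (-(pT n f p)) * pT n (pT n g) p := by
    have := pT_mul (n := n) (f := fun q => -(pT n f q)) (g := pT n g)
      (contDiff_pT hf).neg (contDiff_pT hg) p
    rw [this, pT_neg]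
  have hS : ContDiff ℝ (⊤ : ℕ∞) (fun q => ∑ i : Fin n, pX n i f q * pX n i g q) :=
    ContDiff.sum fun i _ => (contDiff_pX i hf).mul (contDiff_pX i hg)
  have h3 : pT n (fun q => Real.exp (-q.1) * ∑ i : Fin n, pX n i f q * pX n i g q) p
      = -Real.exp (-p.1) * (∑ i : Fin n, pX n i f p * pX n i g p)
        + Real.exp (-p.1) * ∑ i : Fin n,
            (pX n i (pT n f) p * pX n i g p + pX n i f p * pX n i (pT n g) p) := by
    rw [pT_mul contDiff_exp_fst hS, pT_exp]
    congr 1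
    congr 1
    rw [pT_sum Finset.univ _ (fun i _ => (contDiff_pX i hf).mul (contDiff_pX i hg)) p]
    refine Finset.sum_congr rfl fun i _ => ?_
    rw [pT_mul (contDiff_pX i hf) (contDiff_pX i hg) p, pT_pX_comm i hf p, pT_pX_comm i hg p]
  rw [h1, h2, h3]
  simp only [nullQ, mul_add, Finset.mul_sum, Finset.sum_add_distrib, neg_mul, Finset.sum_neg_distrib]
  ring

lemma contDiff_pT_iter {v : ℝ × (Fin n → ℝ) → ℝ} (hv : ContDiff ℝ (⊤ : ℕ∞) v) (a : ℕ) :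
    ContDiff ℝ (⊤ : ℕ∞) ((pT n)^[a] v) := by
  induction a with
  | zero => exact hv
  | succ a ih => rw [Function.iterate_succ_apply']; exact contDiff_pT ih

lemma pX_pT_iter {v : ℝ × (Fin n → ℝ) → ℝ} (hv : ContDiff ℝ (⊤ : ℕ∞) v) (i : Fin n) (a : ℕ) :
    pX n i ((pT n)^[a] v) = (pT n)^[a] (pX n i v) := by
  induction a with
  | zero => rfl
  | succ a ih =>
      rw [Function.iterate_succ_apply', Function.iterate_succ_apply']
      funext p
      rw [← pT_pX_comm i (contDiff_pT_iter hv a) p, ih]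

lemma swapZ (s : Finset ℕ) (t : ℕ → Finset ℕ) (c : ℕ → ℕ → ℝ) (X Y : Fin n → ℕ → ℝ) :
    ∑ i : Fin n, ∑ a ∈ s, ∑ b ∈ t a, c a b * X i a * Y i b
      = ∑ a ∈ s, ∑ b ∈ t a, c a b * ∑ i : Fin n, X i a * Y i b := by
  rw [Finset.sum_comm]
  refine Finset.sum_congr rfl fun a _ => ?_
  rw [Finset.sum_comm]
  refine Finset.sum_congr rfl fun b _ => ?_
  rw [Finset.mul_sum]
  exact Finset.sum_congr rfl fun i _ => mul_assoc _ _ _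

lemma step_analytic (k : ℕ) (C C' : ℕ → ℕ → ℝ) {v w : ℝ × (Fin n → ℝ) → ℝ}
    (hv : ContDiff ℝ (⊤ : ℕ∞) v) (hw : ContDiff ℝ (⊤ : ℕ∞) w) (p : ℝ × (Fin n → ℝ)) :
    pT n (fun q => (∑ a ∈ Finset.range (k+1),
          C a (k-a) * nullQ n ((pT n)^[a] v) ((pT n)^[k-a] w) q)
        + Real.exp (-q.1) * ∑ i : Fin n, ∑ a ∈ Finset.range k, ∑ b ∈ Finset.range (k-a),
            C' a b * (pT n)^[a] (pX n i v) q * (pT n)^[b] (pX n i w) q) p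
      = (∑ a ∈ Finset.range (k+1), C a (k-a) *
            (nullQ n ((pT n)^[a+1] v) ((pT n)^[k-a] w) p
              + nullQ n ((pT n)^[a] v) ((pT n)^[k-a+1] w) p))
        + Real.exp (-p.1) *
          (-(∑ a ∈ Finset.range (k+1), C a (k-a) *
                ∑ i : Fin n, (pT n)^[a] (pX n i v) p * (pT n)^[k-a] (pX n i w) p)
            - (∑ a ∈ Finset.range k, ∑ b ∈ Finset.range (k-a), C' a b *
                ∑ i : Fin n, (pT n)^[a] (pX n i v) p * (pT n)^[b] (pX n i w) p)
            + ∑ a ∈ Finset.range k, ∑ b ∈ Finset.range (k-a), C' a b *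
                ∑ i : Fin n, ((pT n)^[a+1] (pX n i v) p * (pT n)^[b] (pX n i w) p
                  + (pT n)^[a] (pX n i v) p * (pT n)^[b+1] (pX n i w) p)) := by
  have hXv : ∀ i : Fin n, ∀ a : ℕ, ContDiff ℝ (⊤ : ℕ∞) ((pT n)^[a] (pX n i v)) :=
    fun i a => contDiff_pT_iter (contDiff_pX i hv) a
  have hXw : ∀ i : Fin n, ∀ b : ℕ, ContDiff ℝ (⊤ : ℕ∞) ((pT n)^[b] (pX n i w)) :=
    fun i b => contDiff_pT_iter (contDiff_pX i hw) b
  have hA : ContDiff ℝ (⊤ : ℕ∞) (fun q => ∑ a ∈ Finset.range (k+1),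
      C a (k-a) * nullQ n ((pT n)^[a] v) ((pT n)^[k-a] w) q) :=
    ContDiff.sum fun a _ => contDiff_const.mul
      (contDiff_nullQ (contDiff_pT_iter hv a) (contDiff_pT_iter hw (k-a)))
  have hS : ContDiff ℝ (⊤ : ℕ∞) (fun q => ∑ i : Fin n, ∑ a ∈ Finset.range k,
      ∑ b ∈ Finset.range (k-a), C' a b * (pT n)^[a] (pX n i v) q * (pT n)^[b] (pX n i w) q) :=
    ContDiff.sum fun i _ => ContDiff.sum fun a _ => ContDiff.sum fun b _ =>
      (contDiff_const.mul (hXv i a)).mul (hXw i b)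
  have hB : ContDiff ℝ (⊤ : ℕ∞) (fun q => Real.exp (-q.1) * ∑ i : Fin n,
      ∑ a ∈ Finset.range k, ∑ b ∈ Finset.range (k-a),
        C' a b * (pT n)^[a] (pX n i v) q * (pT n)^[b] (pX n i w) q) :=
    contDiff_exp_fst.mul hS
  rw [pT_add hA hB]
  -- compute pT of A
  have hAval : pT n (fun q => ∑ a ∈ Finset.range (k+1),
      C a (k-a) * nullQ n ((pT n)^[a] v) ((pT n)^[k-a] w) q) p
      = ∑ a ∈ Finset.range (k+1), C a (k-a) *
          (nullQ n ((pT n)^[a+1] v) ((pT n)^[k-a] w) p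
            + nullQ n ((pT n)^[a] v) ((pT n)^[k-a+1] w) p
            - Real.exp (-p.1) * ∑ i : Fin n,
                (pT n)^[a] (pX n i v) p * (pT n)^[k-a] (pX n i w) p) := by
    rw [pT_sum _ _ (fun a _ => contDiff_const.mul
      (contDiff_nullQ (contDiff_pT_iter hv a) (contDiff_pT_iter hw (k-a)))) p]
    refine Finset.sum_congr rfl fun a _ => ?_
    rw [pT_const_mul]
    congr 1
    rw [pT_nullQ (contDiff_pT_iter hv a) (contDiff_pT_iter hw (k-a)) p]
    rw [show pT n ((pT n)^[a] v) = (pT n)^[a+1] v from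
      (Function.iterate_succ_apply' (pT n) a v).symm]
    rw [show pT n ((pT n)^[k-a] w) = (pT n)^[k-a+1] w from
      (Function.iterate_succ_apply' (pT n) (k-a) w).symm]
    have : ∀ i : Fin n, pX n i ((pT n)^[a] v) p * pX n i ((pT n)^[k-a] w) p
        = (pT n)^[a] (pX n i v) p * (pT n)^[k-a] (pX n i w) p := fun i => by
      rw [pX_pT_iter hv i a, pX_pT_iter hw i (k-a)]
    rw [Finset.sum_congr rfl fun i _ => this i]
  -- compute pT of B
  have hBval : pT n (fun q => Real.exp (-q.1) * ∑ i : Fin n,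
      ∑ a ∈ Finset.range k, ∑ b ∈ Finset.range (k-a),
        C' a b * (pT n)^[a] (pX n i v) q * (pT n)^[b] (pX n i w) q) p
      = -Real.exp (-p.1) * (∑ i : Fin n, ∑ a ∈ Finset.range k, ∑ b ∈ Finset.range (k-a),
            C' a b * (pT n)^[a] (pX n i v) p * (pT n)^[b] (pX n i w) p)
        + Real.exp (-p.1) * ∑ i : Fin n, ∑ a ∈ Finset.range k, ∑ b ∈ Finset.range (k-a),
            C' a b * ((pT n)^[a+1] (pX n i v) p * (pT n)^[b] (pX n i w) p
              + (pT n)^[a] (pX n i v) p * (pT n)^[b+1] (pX n i w) p) := by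
    rw [pT_mul contDiff_exp_fst hS, pT_exp]
    congr 2
    rw [pT_sum _ _ (fun i _ => ContDiff.sum fun a _ => ContDiff.sum fun b _ =>
      (contDiff_const.mul (hXv i a)).mul (hXw i b)) p]
    refine Finset.sum_congr rfl fun i _ => ?_
    rw [pT_sum _ _ (fun a _ => ContDiff.sum fun b _ =>
      (contDiff_const.mul (hXv i a)).mul (hXw i b)) p]
    refine Finset.sum_congr rfl fun a _ => ?_
    rw [pT_sum _ _ (fun b _ => (contDiff_const.mul (hXv i a)).mul (hXw i b)) p]
    refine Finset.sum_congr rfl fun b _ => ?_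
    rw [pT_mul (contDiff_const.mul (hXv i a)) (hXw i b) p,
        pT_mul (contDiff_const (c := C' a b)) (hXv i a) p]
    rw [show pT n ((pT n)^[a] (pX n i v)) = (pT n)^[a+1] (pX n i v) from
      (Function.iterate_succ_apply' (pT n) a (pX n i v)).symm]
    rw [show pT n ((pT n)^[b] (pX n i w)) = (pT n)^[b+1] (pX n i w) from
      (Function.iterate_succ_apply' (pT n) b (pX n i w)).symm]
    have hc : pT n (fun _ => C' a b) p = 0 := by
      simp [pT]
    rw [hc]
    ring
  rw [hAval, hBval]
  rw [swapZ (Finset.range k) (fun a => Finset.range (k-a)) C'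
    (fun i a => (pT n)^[a] (pX n i v) p) (fun i b => (pT n)^[b] (pX n i w) p)]
  have hsw2 : ∑ i : Fin n, ∑ a ∈ Finset.range k, ∑ b ∈ Finset.range (k-a),
        C' a b * ((pT n)^[a+1] (pX n i v) p * (pT n)^[b] (pX n i w) p
          + (pT n)^[a] (pX n i v) p * (pT n)^[b+1] (pX n i w) p)
      = ∑ a ∈ Finset.range k, ∑ b ∈ Finset.range (k-a), C' a b *
          ∑ i : Fin n, ((pT n)^[a+1] (pX n i v) p * (pT n)^[b] (pX n i w) p
            + (pT n)^[a] (pX n i v) p * (pT n)^[b+1] (pX n i w) p) := by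
    rw [Finset.sum_comm]
    refine Finset.sum_congr rfl fun a _ => ?_
    rw [Finset.sum_comm]
    refine Finset.sum_congr rfl fun b _ => ?_
    rw [Finset.mul_sum]
  rw [hsw2]
  have hexp : ∑ a ∈ Finset.range (k+1), C a (k-a) *
        (nullQ n ((pT n)^[a+1] v) ((pT n)^[k-a] w) p
          + nullQ n ((pT n)^[a] v) ((pT n)^[k-a+1] w) p
          - Real.exp (-p.1) * ∑ i : Fin n,
              (pT n)^[a] (pX n i v) p * (pT n)^[k-a] (pX n i w) p)
      = (∑ a ∈ Finset.range (k+1), C a (k-a) *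
          (nullQ n ((pT n)^[a+1] v) ((pT n)^[k-a] w) p
            + nullQ n ((pT n)^[a] v) ((pT n)^[k-a+1] w) p))
        - Real.exp (-p.1) * ∑ a ∈ Finset.range (k+1), C a (k-a) *
            ∑ i : Fin n, (pT n)^[a] (pX n i v) p * (pT n)^[k-a] (pX n i w) p := by
    rw [Finset.mul_sum, ← Finset.sum_sub_distrib]
    exact Finset.sum_congr rfl fun a _ => by ring
  rw [hexp]
  have hmul : ∀ a ∈ Finset.range (k+1), C a (k-a) *
      (nullQ n ((pT n)^[a+1] v) ((pT n)^[k-a] w) p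
        + nullQ n ((pT n)^[a] v) ((pT n)^[k-a+1] w) p)
      = C a (k-a) * (nullQ n ((pT n)^[a+1] v) ((pT n)^[k-a] w) p
        + nullQ n ((pT n)^[a] v) ((pT n)^[k-a+1] w) p) := fun a _ => rfl
  ring

lemma algebraQ (k : ℕ) (c : ℕ → ℝ) (QQ : ℕ → ℕ → ℝ) :
    ∑ a ∈ Finset.range (k+1), c a * (QQ (a+1) (k-a) + QQ a (k-a+1))
      = ∑ a ∈ Finset.range (k+1+1),
          ((if a ≤ k then c a else 0) + (if 1 ≤ a then c (a-1) else 0)) * QQ a (k+1-a) := by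
  simp only [add_mul, mul_add, Finset.sum_add_distrib]
  have S1 : ∑ a ∈ Finset.range (k+2), (if a ≤ k then c a else 0) * QQ a (k+1-a)
      = ∑ a ∈ Finset.range (k+1), c a * QQ a (k-a+1) := by
    rw [Finset.sum_range_succ, if_neg (by omega), zero_mul, add_zero]
    refine Finset.sum_congr rfl fun a ha => ?_
    have h := Finset.mem_range.mp ha
    rw [if_pos (by omega), show k+1-a = k-a+1 by omega]
  have S2 : ∑ a ∈ Finset.range (k+2), (if 1 ≤ a then c (a-1) else 0) * QQ a (k+1-a)
      = ∑ a ∈ Finset.range (k+1), c a * QQ (a+1) (k-a) := by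
    rw [Finset.sum_range_succ']
    simp only [Nat.add_sub_cancel]
    rw [if_neg (by omega), zero_mul, add_zero]
    refine Finset.sum_congr rfl fun a ha => ?_
    rw [if_pos (by omega), show k+1-(a+1) = k-a by omega]
  rw [S1, S2]
  ring

lemma algebraP (k : ℕ) (C C' : ℕ → ℕ → ℝ) (Z : ℕ → ℕ → ℝ) :
    ∑ a ∈ Finset.range (k+1), ∑ b ∈ Finset.range (k+1-a),
      ((if a + b = k then -C a (k-a) else 0)
       + (if a < k ∧ b < k - a then -C' a b else 0)
       + (if 1 ≤ a ∧ a - 1 < k ∧ b < k - (a-1) then C' (a-1) b else 0)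
       + (if a < k ∧ 1 ≤ b ∧ b - 1 < k - a then C' a (b-1) else 0)) * Z a b
    = -(∑ a ∈ Finset.range (k+1), C a (k-a) * Z a (k-a))
      - (∑ a ∈ Finset.range k, ∑ b ∈ Finset.range (k-a), C' a b * Z a b)
      + (∑ a ∈ Finset.range k, ∑ b ∈ Finset.range (k-a), C' a b * Z (a+1) b
         + ∑ a ∈ Finset.range k, ∑ b ∈ Finset.range (k-a), C' a b * Z a (b+1)) := by
  simp only [add_mul, Finset.sum_add_distrib]
  have P1 : ∑ a ∈ Finset.range (k+1), ∑ b ∈ Finset.range (k+1-a),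
      (if a + b = k then -C a (k-a) else 0) * Z a b
      = -(∑ a ∈ Finset.range (k+1), C a (k-a) * Z a (k-a)) := by
    rw [← Finset.sum_neg_distrib]
    refine Finset.sum_congr rfl fun a ha => ?_
    have hak := Finset.mem_range.mp ha
    have h1 : ∀ b ∈ Finset.range (k+1-a),
        (if a + b = k then -C a (k-a) else 0) * Z a b
          = if b = k - a then -(C a (k-a) * Z a b) else 0 := by
      intro b _
      by_cases h : b = k - a
      · rw [if_pos (by omega), if_pos h, neg_mul]
      · rw [if_neg (by omega), if_neg h, zero_mul]
    rw [Finset.sum_congr rfl h1,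
      Finset.sum_ite_eq' (Finset.range (k+1-a)) (k-a) (fun b => -(C a (k-a) * Z a b)),
      if_pos (Finset.mem_range.mpr (by omega))]
  have P2 : ∑ a ∈ Finset.range (k+1), ∑ b ∈ Finset.range (k+1-a),
      (if a < k ∧ b < k - a then -C' a b else 0) * Z a b
      = -(∑ a ∈ Finset.range k, ∑ b ∈ Finset.range (k-a), C' a b * Z a b) := by
    have hz : ∑ b ∈ Finset.range (k+1-k), (if k < k ∧ b < k - k then -C' k b else 0) * Z k b
        = 0 := Finset.sum_eq_zero fun b _ => by rw [if_neg (by omega), zero_mul]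
    rw [Finset.sum_range_succ, hz, add_zero, ← Finset.sum_neg_distrib]
    refine Finset.sum_congr rfl fun a ha => ?_
    have hak := Finset.mem_range.mp ha
    rw [← Finset.sum_subset (Finset.range_subset_range.mpr (show k-a ≤ k+1-a by omega))
      (fun b _ hnb => by
        simp only [Finset.mem_range, not_lt] at hnb
        rw [if_neg (by omega), zero_mul])]
    rw [← Finset.sum_neg_distrib]
    refine Finset.sum_congr rfl fun b hb => ?_
    have hbk := Finset.mem_range.mp hb
    rw [if_pos (by omega), neg_mul]
  have P3 : ∑ a ∈ Finset.range (k+1), ∑ b ∈ Finset.range (k+1-a),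
      (if 1 ≤ a ∧ a - 1 < k ∧ b < k - (a-1) then C' (a-1) b else 0) * Z a b
      = ∑ a ∈ Finset.range k, ∑ b ∈ Finset.range (k-a), C' a b * Z (a+1) b := by
    have hz : ∑ b ∈ Finset.range (k+1-0),
        (if 1 ≤ 0 ∧ 0 - 1 < k ∧ b < k - (0-1) then C' (0-1) b else 0) * Z 0 b
        = 0 := Finset.sum_eq_zero fun b _ => by rw [if_neg (by omega), zero_mul]
    rw [Finset.sum_range_succ', hz, add_zero]
    refine Finset.sum_congr rfl fun a ha => ?_
    have hak := Finset.mem_range.mp ha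
    simp only [Nat.add_sub_cancel]
    rw [show k+1-(a+1) = k-a by omega]
    refine Finset.sum_congr rfl fun b hb => ?_
    have hbk := Finset.mem_range.mp hb
    rw [if_pos (by omega)]
  have P4 : ∑ a ∈ Finset.range (k+1), ∑ b ∈ Finset.range (k+1-a),
      (if a < k ∧ 1 ≤ b ∧ b - 1 < k - a then C' a (b-1) else 0) * Z a b
      = ∑ a ∈ Finset.range k, ∑ b ∈ Finset.range (k-a), C' a b * Z a (b+1) := by
    have hz : ∑ b ∈ Finset.range (k+1-k),
        (if k < k ∧ 1 ≤ b ∧ b - 1 < k - k then C' k (b-1) else 0) * Z k b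
        = 0 := Finset.sum_eq_zero fun b _ => by rw [if_neg (by omega), zero_mul]
    rw [Finset.sum_range_succ, hz, add_zero]
    refine Finset.sum_congr rfl fun a ha => ?_
    have hak := Finset.mem_range.mp ha
    rw [show k+1-a = (k-a)+1 by omega, Finset.sum_range_succ',
      if_neg (show ¬(a < k ∧ 1 ≤ 0 ∧ 0 - 1 < k - a) by omega), zero_mul, add_zero]
    refine Finset.sum_congr rfl fun b hb => ?_
    have hbk := Finset.mem_range.mp hb
    simp only [Nat.add_sub_cancel]
    rw [if_pos (by omega)]
  rw [P1, P2, P3, P4]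
  ring

/-- Higher time derivatives of the de Sitter null form:
`∂ₜ^{I₀}Q(v,w) = Σ_{I₀₁+I₀₂=I₀} C Q(∂ₜ^{I₀₁}v, ∂ₜ^{I₀₂}w)
 + e^{-t} Σᵢ Σ_{Ĩ₀₁+Ĩ₀₂≤I₀-1} C' (∂ₜ^{Ĩ₀₁}∂ₓᵢv)(∂ₜ^{Ĩ₀₂}∂ₓᵢw)`. -/
theorem stmt14 (n : ℕ) (hn : 1 ≤ n) (I0 : ℕ) :
    ∃ C C' : ℕ → ℕ → ℝ,
      ∀ v w : ℝ × (Fin n → ℝ) → ℝ, ContDiff ℝ (⊤ : ℕ∞) v → ContDiff ℝ (⊤ : ℕ∞) w →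
        ∀ p : ℝ × (Fin n → ℝ),
          (pT n)^[I0] (nullQ n v w) p
            = (∑ a ∈ Finset.range (I0 + 1),
                  C a (I0 - a) * nullQ n ((pT n)^[a] v) ((pT n)^[I0 - a] w) p)
              + Real.exp (-p.1) *
                  ∑ i : Fin n, ∑ a ∈ Finset.range I0, ∑ b ∈ Finset.range (I0 - a),
                    C' a b * (pT n)^[a] (pX n i v) p * (pT n)^[b] (pX n i w) p := by
  induction I0 with
  | zero =>
      refine ⟨fun a _ => if a = 0 then 1 else 0, fun _ _ => 0, fun v w hv hw p => ?_⟩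
      simp
  | succ k IH =>
      obtain ⟨C, C', hIH⟩ := IH
      refine ⟨fun a _ => (if a ≤ k then C a (k-a) else 0)
          + (if 1 ≤ a then C (a-1) (k-(a-1)) else 0),
        fun a b => (if a + b = k then -C a (k-a) else 0)
          + (if a < k ∧ b < k - a then -C' a b else 0)
          + (if 1 ≤ a ∧ a - 1 < k ∧ b < k - (a-1) then C' (a-1) b else 0)
          + (if a < k ∧ 1 ≤ b ∧ b - 1 < k - a then C' a (b-1) else 0),
        fun v w hv hw p => ?_⟩
      rw [Function.iterate_succ_apply']
      have hfun : (pT n)^[k] (nullQ n v w) = fun q =>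
          (∑ a ∈ Finset.range (k+1), C a (k-a) * nullQ n ((pT n)^[a] v) ((pT n)^[k-a] w) q)
          + Real.exp (-q.1) * ∑ i : Fin n, ∑ a ∈ Finset.range k, ∑ b ∈ Finset.range (k-a),
              C' a b * (pT n)^[a] (pX n i v) q * (pT n)^[b] (pX n i w) q :=
        funext (hIH v w hv hw)
      rw [hfun, step_analytic k C C' hv hw p]
      beta_reduce
      rw [swapZ (Finset.range (k+1)) (fun a => Finset.range (k+1-a)) _
        (fun i a => (pT n)^[a] (pX n i v) p) (fun i b => (pT n)^[b] (pX n i w) p)]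
      rw [algebraP k C C'
        (fun a b => ∑ i : Fin n, (pT n)^[a] (pX n i v) p * (pT n)^[b] (pX n i w) p)]
      rw [← algebraQ k (fun a => C a (k-a))
        (fun a b => nullQ n ((pT n)^[a] v) ((pT n)^[b] w) p)]
      simp only [Finset.sum_add_distrib, mul_add]
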